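/- Let B be ℂ³ with basis x, y, z and bilinear multiplication whose only nonzero products of basis elements are z·x = x + y and z·y = y (this makes B a Leibniz algebra). Then every t = c₁x + c₂y + c₃z with c₁ ≠ 0 and c₃ ≠ 0 satisfies that {t, t², t³} is linearly independent; in particular B is cyclic. -/

import Mathlib

/-- `lpow μ x k` is the left-normed power `x^(k+1)`; so `lpow μ x 0 = x`,
`lpow μ x 1 = x·x = x²`, `lpow μ x 2 = x·x² = x³`, etc. -/
def lpow {A : Type*} [AddCommGroup A] [Module ℂ A]
    (μ : A →ₗ[ℂ] A →ₗ[ℂ] A) (x : A) : ℕ → A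
  | 0 => x
  | n + 1 => μ x (lpow μ x n)
/-- The algebra B = ℂ³ with basis x = e₀, y = e₁, z = e₂ whose only nonzero products
of basis elements are z·x = x + y and z·y = y; thus u·v = u₂ • L_z(v) with
L_z(x) = x + y, L_z(y) = y, L_z(z) = 0. -/
noncomputable def mulB : (Fin 3 → ℂ) →ₗ[ℂ] (Fin 3 → ℂ) →ₗ[ℂ] (Fin 3 → ℂ) :=
  (LinearMap.proj 2).smulRight (Matrix.mulVecLin !![1,0,0;1,1,0;0,0,0])

noncomputable def xB : Fin 3 → ℂ := ![1,0,0]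
noncomputable def yB : Fin 3 → ℂ := ![0,1,0]
noncomputable def zB : Fin 3 → ℂ := ![0,0,1]

lemma pow1 (c₁ c₂ c₃ : ℂ) :
    lpow mulB (c₁ • xB + c₂ • yB + c₃ • zB) 1 = ![c₃*c₁, c₃*(c₁+c₂), 0] := by
  simp [lpow, mulB, xB, yB, zB, Matrix.mulVecLin, Matrix.mulVec, dotProduct]
  ext i; fin_cases i <;> simp <;> ring

lemma pow2 (c₁ c₂ c₃ : ℂ) :
    lpow mulB (c₁ • xB + c₂ • yB + c₃ • zB) 2 = ![c₃^2*c₁, c₃^2*(2*c₁+c₂), 0] := by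
  have : lpow mulB (c₁ • xB + c₂ • yB + c₃ • zB) 2
      = mulB (c₁ • xB + c₂ • yB + c₃ • zB) (lpow mulB (c₁ • xB + c₂ • yB + c₃ • zB) 1) := rfl
  rw [this, pow1]
  simp [mulB, xB, yB, zB, Matrix.mulVecLin, Matrix.mulVec, dotProduct]
  ext i; fin_cases i <;> simp <;> ring

lemma indep (c₁ c₂ c₃ : ℂ) (h1 : c₁ ≠ 0) (h3 : c₃ ≠ 0) :
    LinearIndependent ℂ
      ![c₁ • xB + c₂ • yB + c₃ • zB,
        lpow mulB (c₁ • xB + c₂ • yB + c₃ • zB) 1,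
        lpow mulB (c₁ • xB + c₂ • yB + c₃ • zB) 2] := by
  rw [Fintype.linearIndependent_iff]
  intro g hg
  rw [Fin.sum_univ_three] at hg
  simp only [Matrix.cons_val_zero, Matrix.cons_val_one, Matrix.head_cons, pow1, pow2,
    Matrix.cons_val_two, Matrix.tail_cons] at hg
  have h0 := congrFun hg 0
  have hh1 := congrFun hg 1
  have h2 := congrFun hg 2
  simp [xB, yB, zB] at h0 hh1 h2
  have hg0 : g 0 = 0 := by
    rcases h2 with h | h
    · exact h
    · exact absurd h h3
  have hg0' : g 0 = 0 := hg0
  rw [hg0] at h0 hh1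
  have hkey : g 2 * (c₃^2*c₁^2) = 0 := by linear_combination c₁*hh1 - (c₁+c₂)*h0
  have hg2 : g 2 = 0 := by
    simpa [h1, h3, mul_eq_zero, pow_eq_zero_iff] using hkey
  have hg1 : g 1 = 0 := by
    rw [hg2] at h0
    have : g 1 * (c₃ * c₁) = 0 := by linear_combination h0
    simpa [h1, h3, mul_eq_zero] using this
  intro i; fin_cases i <;> assumption

/-- Every t = c₁x + c₂y + c₃z with c₁ ≠ 0 and c₃ ≠ 0 has {t, t², t³}
linearly independent; in particular B is cyclic. -/
theorem algebraB_class6_cyclic :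
    (∀ c₁ c₂ c₃ : ℂ, c₁ ≠ 0 → c₃ ≠ 0 →
      LinearIndependent ℂ
        ![c₁ • xB + c₂ • yB + c₃ • zB,
          lpow mulB (c₁ • xB + c₂ • yB + c₃ • zB) 1,
          lpow mulB (c₁ • xB + c₂ • yB + c₃ • zB) 2]) ∧
    (∃ t : Fin 3 → ℂ, ∃ e : Module.Basis (Fin 3) ℂ (Fin 3 → ℂ),
        ∀ i : Fin 3, e i = lpow mulB t (i : ℕ)) := by
  refine ⟨fun c₁ c₂ c₃ h1 h3 => indep c₁ c₂ c₃ h1 h3, ?_⟩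
  set t : Fin 3 → ℂ := (1:ℂ) • xB + (0:ℂ) • yB + (1:ℂ) • zB with ht
  have li := indep 1 0 1 one_ne_zero one_ne_zero
  refine ⟨t, basisOfLinearIndependentOfCardEqFinrank li (by simp), fun i => ?_⟩
  rw [coe_basisOfLinearIndependentOfCardEqFinrank]
  fin_cases i <;> rfl
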